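/- arXiv:1406.6398 — 6 statements merged into one kernel-verified Lean document; each statement's English description precedes it below -/
import Mathlib

section
/- For any finite metric space (X,d) and any positive integer k, there is at most one perfect k-clustering of (X,d): if C and C' are both perfect clusterings of X into k nonempty clusters, then C = C' (they induce the same equivalence relation on X). -/
/-- If every `c'`-together pair is `c`-together and `c` is surjective, then
every `c`-together pair is `c'`-together (a counting argument on `Fin k`). -/
lemma clustering_refine {X : Type*} [Fintype X] {k : ℕ} (c c' : X → Fin k)
    (hsurj : Function.Surjective c) (hsurj' : Function.Surjective c')
    (h : ∀ a b, c' a = c' b → c a = c b) :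
    ∀ x y, c x = c y → c' x = c' y := by
  obtain ⟨g, hg⟩ := hsurj'.hasRightInverse
  set f : Fin k → Fin k := fun i => c (g i) with hf
  have key : ∀ x, f (c' x) = c x := by
    intro x
    exact h _ _ (hg (c' x))
  have fsurj : Function.Surjective f := by
    intro j
    obtain ⟨x, hx⟩ := hsurj j
    exact ⟨c' x, by rw [key x, hx]⟩
  have finj : Function.Injective f := Finite.injective_iff_surjective.mpr fsurj
  intro x y hxy
  apply finj
  rw [key x, key y, hxy]

/-- One direction of the uniqueness statement. -/
lemma clustering_dir {X : Type*} [Fintype X] {k : ℕ}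
    (d : X → X → ℝ) (c c' : X → Fin k)
    (hsurj : Function.Surjective c) (hsurj' : Function.Surjective c')
    (hperf : ∀ x y w z : X, c x = c y → c w ≠ c z → d x y < d w z)
    (hperf' : ∀ x y w z : X, c' x = c' y → c' w ≠ c' z → d x y < d w z) :
    ∀ x y, c x = c y → c' x = c' y := by
  by_cases H : ∀ a b, c' a = c' b → c a = c b
  · exact clustering_refine c c' hsurj hsurj' H
  · push_neg at H
    obtain ⟨a, b, hab, hab'⟩ := H
    intro x y hxy
    by_contra hne
    have h1 := hperf x y a b hxy hab'
    have h2 := hperf' a b x y hab hne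
    linarith

/-- a finite space with a symmetric distance has at most one perfect
`k`-clustering: any two perfect clusterings into `k` nonempty clusters induce the
same equivalence relation on the points. -/
theorem perfect_clustering_unique {X : Type*} [Fintype X] {k : ℕ} (hk : 0 < k)
    (d : X → X → ℝ) (hsymm : ∀ x y, d x y = d y x) (hrefl : ∀ x, d x x = 0)
    (c c' : X → Fin k)
    (hsurj : Function.Surjective c) (hsurj' : Function.Surjective c')
    (hperf : ∀ x y w z : X, c x = c y → c w ≠ c z → d x y < d w z)
    (hperf' : ∀ x y w z : X, c' x = c' y → c' w ≠ c' z → d x y < d w z) :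
    ∀ x y : X, c x = c y ↔ c' x = c' y := by
  intro x y
  constructor
  · exact clustering_dir d c c' hsurj hsurj' hperf hperf' x y
  · exact clustering_dir d c' c hsurj' hsurj hperf' hperf x y
end

section
/- Let x_o, x_1, ..., x_M, x_1', ..., x_M' be an M-configuration in a metric space (X,d). Fix an index 1 ≤ j ≤ M and a subset S ⊆ {1,...,M} with |S| > 1. Then the finite set A = {x_o, x_j'} ∪ {x_i : i ∈ S} admits a nice 2-clustering if and only if j ∉ S. -/
/-- An `M`-configuration in a metric space: points `xo`, `x 0, …, x (M-1)`,
`x' 0, …, x' (M-1)` with the prescribed distance constraints (these force all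
`2M+1` points to be distinct and all interpoint distances to lie in `[1,2]`). -/
def IsMConfiguration {X : Type*} [MetricSpace X] {M : ℕ}
    (xo : X) (x x' : Fin M → X) : Prop :=
  (∀ i, dist xo (x i) ∈ Set.Ioc (3/2 : ℝ) 2 ∧ dist xo (x' i) ∈ Set.Ioc (3/2 : ℝ) 2) ∧
  (∀ i j, i ≠ j → dist (x i) (x j) ∈ Set.Icc (1 : ℝ) (3/2) ∧
      dist (x' i) (x' j) ∈ Set.Icc (1 : ℝ) (3/2) ∧
      dist (x i) (x' j) ∈ Set.Icc (1 : ℝ) (3/2)) ∧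
  (∀ i, dist (x i) (x' i) > dist xo (x i) ∧ dist (x i) (x' i) ≤ 2)

/-- `{C₁, C₂}` is a nice 2-clustering of the finite set `A`. -/
def IsNiceTwoClustering {X : Type*} [MetricSpace X] [DecidableEq X]
    (A C₁ C₂ : Finset X) : Prop :=
  C₁ ∪ C₂ = A ∧ Disjoint C₁ C₂ ∧ C₁.Nonempty ∧ C₂.Nonempty ∧
  ∀ p ∈ A, ∀ q ∈ A, ∀ r ∈ A,
    ((p ∈ C₁ ∧ q ∈ C₁) ∨ (p ∈ C₂ ∧ q ∈ C₂)) →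
    ((p ∈ C₁ ∧ r ∈ C₂) ∨ (p ∈ C₂ ∧ r ∈ C₁)) →
    dist q p < dist r p

lemma mconf_aux {X : Type*} [MetricSpace X] [DecidableEq X]
    {M : ℕ} (xo : X) (x x' : Fin M → X) (hconf : IsMConfiguration xo x x')
    (j i : Fin M) (S : Finset (Fin M)) (hjS : j ∈ S) (hiS : i ∈ S) (hij : i ≠ j)
    (C₁ C₂ : Finset X)
    (h : IsNiceTwoClustering (insert xo (insert (x' j) (S.image x))) C₁ C₂)
    (hxo : xo ∈ C₁) : False := by
  obtain ⟨h1, h2, h3⟩ := hconf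
  obtain ⟨hU, hD, hne1, hne2, hnice⟩ := h
  set A := insert xo (insert (x' j) (S.image x)) with hA
  have hAxo : xo ∈ A := Finset.mem_insert_self _ _
  have hAx' : x' j ∈ A := Finset.mem_insert_of_mem (Finset.mem_insert_self _ _)
  have hAx : ∀ k ∈ S, x k ∈ A := fun k hk =>
    Finset.mem_insert_of_mem (Finset.mem_insert_of_mem (Finset.mem_image_of_mem x hk))
  have hmem : ∀ a ∈ A, a ∈ C₁ ∨ a ∈ C₂ := by
    intro a ha; rw [← hU] at ha; exact Finset.mem_union.mp ha
  have hdisj : ∀ a, a ∈ C₁ → a ∈ C₂ → False := by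
    intro a h1 h2; exact Finset.disjoint_left.mp hD h1 h2
  -- Step 1: x i ∈ C₂
  have hxi : x i ∈ C₂ := by
    rcases hmem _ (hAx i hiS) with hxi1 | hxi2
    · exfalso
      obtain ⟨r, hr⟩ := hne2
      have hrA : r ∈ A := by rw [← hU]; exact Finset.mem_union_right _ hr
      have key := hnice _ (hAx i hiS) _ hAxo _ hrA (Or.inl ⟨hxi1, hxo⟩) (Or.inl ⟨hxi1, hr⟩)
      have hr32 : dist r (x i) ≤ 3/2 := by
        rw [hA] at hrA
        rcases Finset.mem_insert.mp hrA with rfl | hrA'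
        · exact absurd hr (fun hc => hdisj _ hxo hc)
        rcases Finset.mem_insert.mp hrA' with rfl | hrA''
        · rw [dist_comm]; exact ((h2 i j hij).2.2).2
        obtain ⟨k, hkS, rfl⟩ := Finset.mem_image.mp hrA''
        rcases eq_or_ne k i with rfl | hki
        · exact absurd hr (fun hc => hdisj _ hxi1 hc)
        · exact ((h2 k i hki).1).2
      have := (h1 i).1.1
      linarith
    · exact hxi2
  -- Step 2: case on x' j
  rcases hmem _ hAx' with hx'1 | hx'2
  · -- x' j with xo : use p = x' j, q = xo, r = x i
    have key := hnice _ hAx' _ hAxo _ (hAx i hiS) (Or.inl ⟨hx'1, hxo⟩) (Or.inl ⟨hx'1, hxi⟩)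
    have := (h1 j).2.1
    have := ((h2 i j hij).2.2).2
    linarith
  · rcases hmem _ (hAx j hjS) with hxj1 | hxj2
    · -- x j with xo : p = x j, q = xo, r = x i
      have key := hnice _ (hAx j hjS) _ hAxo _ (hAx i hiS) (Or.inl ⟨hxj1, hxo⟩) (Or.inl ⟨hxj1, hxi⟩)
      have := (h1 j).1.1
      have := ((h2 i j hij).1).2
      linarith
    · -- x j, x' j together, xo apart : p = x j, q = x' j, r = xo
      have key := hnice _ (hAx j hjS) _ hAx' _ hAxo (Or.inr ⟨hxj2, hx'2⟩) (Or.inr ⟨hxj2, hxo⟩)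
      have := (h3 j).1
      rw [dist_comm (x' j) (x j)] at key
      linarith

/-- for an `M`-configuration, an index `j` and `S ⊆ {1,…,M}` with `|S| > 1`,
the set `A = {x_o, x_j'} ∪ {x_i : i ∈ S}` has a nice 2-clustering iff `j ∉ S`. -/
theorem mconfiguration_nice_two_clustering_iff {X : Type*} [MetricSpace X] [DecidableEq X]
    {M : ℕ} (xo : X) (x x' : Fin M → X) (hconf : IsMConfiguration xo x x')
    (j : Fin M) (S : Finset (Fin M)) (hS : 1 < S.card) :
    (∃ C₁ C₂ : Finset X,
        IsNiceTwoClustering (insert xo (insert (x' j) (S.image x))) C₁ C₂) ↔ j ∉ S := by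
  obtain ⟨h1, h2, h3⟩ := hconf
  constructor
  · rintro ⟨C₁, C₂, hcl⟩ hjS
    obtain ⟨i, hiS, hij⟩ := Finset.exists_mem_ne hS j
    have hxoA : xo ∈ insert xo (insert (x' j) (S.image x)) := Finset.mem_insert_self _ _
    have hswap : IsNiceTwoClustering (insert xo (insert (x' j) (S.image x))) C₂ C₁ := by
      obtain ⟨hU, hD, hne1, hne2, hnice⟩ := hcl
      exact ⟨by rw [Finset.union_comm]; exact hU, hD.symm, hne2, hne1,
        fun p hp q hq r hr hs hd => hnice p hp q hq r hr hs.symm hd.symm⟩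
    have hxoU : xo ∈ C₁ ∪ C₂ := by rw [hcl.1]; exact hxoA
    rcases Finset.mem_union.mp hxoU with h | h
    · exact mconf_aux xo x x' ⟨h1, h2, h3⟩ j i S hjS hiS hij C₁ C₂ hcl h
    · exact mconf_aux xo x x' ⟨h1, h2, h3⟩ j i S hjS hiS hij C₂ C₁ hswap h
  · intro hjS
    have hfar : ∀ a ∈ insert (x' j) (S.image x), 3/2 < dist xo a := by
      intro a ha
      rcases Finset.mem_insert.mp ha with rfl | ha'
      · exact (h1 j).2.1
      · obtain ⟨k, hkS, rfl⟩ := Finset.mem_image.mp ha'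
        exact (h1 k).1.1
    have hxoC2 : xo ∉ insert (x' j) (S.image x) := by
      intro hc
      have := hfar xo hc
      simp at this; linarith
    have hclose : ∀ a ∈ insert (x' j) (S.image x), ∀ b ∈ insert (x' j) (S.image x),
        dist a b ≤ 3/2 ∨ a = b := by
      intro a ha b hb
      rcases Finset.mem_insert.mp ha with rfl | ha' <;>
        rcases Finset.mem_insert.mp hb with rfl | hb'
      · exact Or.inr rfl
      · obtain ⟨k, hkS, rfl⟩ := Finset.mem_image.mp hb'
        have hkj : k ≠ j := fun hc => hjS (hc ▸ hkS)
        rw [dist_comm]; exact Or.inl ((h2 k j hkj).2.2).2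
      · obtain ⟨k, hkS, rfl⟩ := Finset.mem_image.mp ha'
        have hkj : k ≠ j := fun hc => hjS (hc ▸ hkS)
        exact Or.inl ((h2 k j hkj).2.2).2
      · obtain ⟨k, hkS, rfl⟩ := Finset.mem_image.mp ha'
        obtain ⟨m, hmS, rfl⟩ := Finset.mem_image.mp hb'
        rcases eq_or_ne k m with rfl | hkm
        · exact Or.inr rfl
        · exact Or.inl ((h2 k m hkm).1).2
    refine ⟨{xo}, insert (x' j) (S.image x), (Finset.insert_eq _ _).symm,
      Finset.disjoint_singleton_left.mpr hxoC2, ⟨xo, Finset.mem_singleton_self xo⟩,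
      ⟨x' j, Finset.mem_insert_self _ _⟩, ?_⟩
    intro p hp q hq r hr hs hd
    rcases hs with ⟨hp1, hq1⟩ | ⟨hp2, hq2⟩
    · have hp' := Finset.mem_singleton.mp hp1
      have hq' := Finset.mem_singleton.mp hq1
      rw [hp', hq', dist_self]
      rcases hd with ⟨-, hr2⟩ | ⟨hpp2, -⟩
      · have := hfar r hr2
        rw [dist_comm]; linarith
      · exact absurd (hp' ▸ hpp2) hxoC2
    · rcases hd with ⟨hp1, -⟩ | ⟨-, hr1⟩
      · exact absurd ((Finset.mem_singleton.mp hp1) ▸ hp2) hxoC2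
      · rw [Finset.mem_singleton.mp hr1]
        have hfp : 3/2 < dist xo p := hfar p hp2
        rcases hclose q hq2 p hp2 with hle | heq
        · linarith
        · rw [heq, dist_self]; linarith
end

section
/- Suppose C = {C_1,...,C_k} is a clustering of a finite set X with cores C_1^o,...,C_k^o, and let β = min_i |C_i^o| / |X|. If T is a uniformly random subset of X of size ℓ ≥ k (sampled without replacement), then with probability at least 1 - k·e^{-βℓ}, T intersects the core of every cluster, and hence the nearest-center clustering induced by T is a refinement of C. -/
open scoped Classical

private lemma descFact_aux (a b : ℕ) (hab : a ≤ b) (ℓ : ℕ) :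
    a.descFactorial ℓ * b ^ ℓ ≤ a ^ ℓ * b.descFactorial ℓ := by
  induction ℓ with
  | zero => simp
  | succ ℓ ih =>
    rw [Nat.descFactorial_succ, Nat.descFactorial_succ, pow_succ, pow_succ]
    have key : (a - ℓ) * b ≤ a * (b - ℓ) := by
      rw [Nat.sub_mul, Nat.mul_sub]
      exact Nat.sub_le_sub_left (by nlinarith) _
    calc (a - ℓ) * a.descFactorial ℓ * (b ^ ℓ * b)
        = ((a - ℓ) * b) * (a.descFactorial ℓ * b ^ ℓ) := by ring
      _ ≤ (a * (b - ℓ)) * (a ^ ℓ * b.descFactorial ℓ) := Nat.mul_le_mul key ih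
      _ = a ^ ℓ * a * ((b - ℓ) * b.descFactorial ℓ) := by ring

private lemma choose_aux (a b ℓ : ℕ) (hab : a ≤ b) :
    a.choose ℓ * b ^ ℓ ≤ a ^ ℓ * b.choose ℓ := by
  have h := descFact_aux a b hab ℓ
  rw [Nat.descFactorial_eq_factorial_mul_choose, Nat.descFactorial_eq_factorial_mul_choose] at h
  have hfac : 0 < Nat.factorial ℓ := Nat.factorial_pos ℓ
  have h' : Nat.factorial ℓ * (a.choose ℓ * b ^ ℓ) ≤ Nat.factorial ℓ * (a ^ ℓ * b.choose ℓ) := by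
    calc Nat.factorial ℓ * (a.choose ℓ * b ^ ℓ)
        = Nat.factorial ℓ * a.choose ℓ * b ^ ℓ := by ring
      _ ≤ a ^ ℓ * (Nat.factorial ℓ * b.choose ℓ) := h
      _ = Nat.factorial ℓ * (a ^ ℓ * b.choose ℓ) := by ring
  exact Nat.le_of_mul_le_mul_left h' hfac

private lemma choose_real (n m ℓ : ℕ) (hm : m ≤ n) (hn : 0 < n) :
    (((n - m).choose ℓ : ℝ)) ≤ Real.exp (-(((m : ℝ) / n) * ℓ)) * (n.choose ℓ : ℝ) := by
  have hnR : (0 : ℝ) < (n : ℝ) := by exact_mod_cast hn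
  have hcast : (((n - m : ℕ) : ℝ)) = (n : ℝ) - m := by
    rw [Nat.cast_sub hm]
  have h1 : ((n - m).choose ℓ : ℝ) * (n : ℝ) ^ ℓ ≤ ((n : ℝ) - m) ^ ℓ * (n.choose ℓ : ℝ) := by
    have := choose_aux (n - m) n ℓ (Nat.sub_le n m)
    have := (Nat.cast_le (α := ℝ)).2 this
    push_cast at this
    rw [hcast] at this
    exact this
  have h2 : ((n - m).choose ℓ : ℝ) ≤ (1 - (m : ℝ) / n) ^ ℓ * (n.choose ℓ : ℝ) := by
    have hne : ((n : ℝ) ^ ℓ) ≠ 0 := by positivity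
    have : ((n - m).choose ℓ : ℝ) ≤ ((n : ℝ) - m) ^ ℓ * (n.choose ℓ : ℝ) / (n : ℝ) ^ ℓ := by
      rw [le_div_iff₀ (by positivity)]
      exact h1
    calc ((n - m).choose ℓ : ℝ) ≤ ((n : ℝ) - m) ^ ℓ * (n.choose ℓ : ℝ) / (n : ℝ) ^ ℓ := this
      _ = (((n : ℝ) - m) / n) ^ ℓ * (n.choose ℓ : ℝ) := by
          rw [div_pow]; ring
      _ = (1 - (m : ℝ) / n) ^ ℓ * (n.choose ℓ : ℝ) := by
          rw [sub_div, div_self hnR.ne']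
  have hmn : (m : ℝ) / n ≤ 1 := by
    rw [div_le_one hnR]; exact_mod_cast hm
  have h3 : (1 - (m : ℝ) / n) ^ ℓ ≤ Real.exp (-(((m : ℝ) / n) * ℓ)) := by
    have hb : (0 : ℝ) ≤ 1 - (m : ℝ) / n := by linarith
    have hle : 1 - (m : ℝ) / n ≤ Real.exp (-((m : ℝ) / n)) := by
      have := Real.add_one_le_exp (-((m : ℝ) / n))
      linarith
    calc (1 - (m : ℝ) / n) ^ ℓ ≤ (Real.exp (-((m : ℝ) / n))) ^ ℓ :=
          pow_le_pow_left₀ hb hle ℓ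
      _ = Real.exp (-(((m : ℝ) / n) * ℓ)) := by
          rw [← Real.exp_nat_mul]; ring_nf
  calc ((n - m).choose ℓ : ℝ) ≤ (1 - (m : ℝ) / n) ^ ℓ * (n.choose ℓ : ℝ) := h2
    _ ≤ Real.exp (-(((m : ℝ) / n) * ℓ)) * (n.choose ℓ : ℝ) :=
        mul_le_mul_of_nonneg_right h3 (by positivity)

/-- let `C : Fin k → Finset α` be a clustering of the finite set `X` with
cores `Co i ⊆ C i` (every point of a cluster is strictly closer to every core point of
its cluster than to any point outside the cluster), and `β = min_i |Co i|/|X|`.  A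
uniformly random size-`ℓ` subset `T` of `X` (`k ≤ ℓ ≤ |X|`) intersects every core — and
hence the nearest-center clustering induced by `T` refines `C` — with probability at
least `1 - k e^{-βℓ}`. -/
theorem random_subset_hits_cores_and_refines {α : Type*} [MetricSpace α] [DecidableEq α]
    (X : Finset α) (k : ℕ) (hk : 0 < k) (C Co : Fin k → Finset α)
    (hcover : ∀ x ∈ X, ∃ i, x ∈ C i)
    (hsub : ∀ i, C i ⊆ X) (hdisj : ∀ i j, i ≠ j → Disjoint (C i) (C j))
    (hcoreSub : ∀ i, Co i ⊆ C i) (hcoreNe : ∀ i, (Co i).Nonempty)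
    (hcore : ∀ i, ∀ x ∈ C i, ∀ z ∈ Co i, ∀ y ∈ X, y ∉ C i → dist x z < dist x y)
    (β : ℝ)
    (hβ : β = (Finset.univ.inf' (@Finset.univ_nonempty (Fin k) _ ⟨⟨0, hk⟩⟩)
      fun i : Fin k => ((Co i).card : ℝ) / (X.card : ℝ)))
    (ℓ : ℕ) (hkℓ : k ≤ ℓ) (hℓ : ℓ ≤ X.card) :
    1 - k * Real.exp (-(β * ℓ)) ≤
      (((X.powersetCard ℓ).filter (fun T =>
          (∀ i, ∃ t ∈ T, t ∈ Co i) ∧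
          ∀ x ∈ X, ∀ t ∈ T, (∀ s ∈ T, dist x t ≤ dist x s) →
            ∃ i, x ∈ C i ∧ t ∈ C i)).card : ℝ) /
        ((X.powersetCard ℓ).card : ℝ) := by
  set n := X.card with hn
  have hnpos : 0 < n := lt_of_lt_of_le (lt_of_lt_of_le hk hkℓ) hℓ
  set P := X.powersetCard ℓ with hP
  have hPcard : P.card = n.choose ℓ := Finset.card_powersetCard ℓ X
  have hPpos : 0 < (P.card : ℝ) := by
    rw [hPcard]; exact_mod_cast Nat.choose_pos hℓ
  set Bad := P.filter (fun T => ∃ i, ∀ t ∈ T, t ∉ Co i) with hBad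
  -- bound on Bad via union bound
  have hBadBound : (Bad.card : ℝ) ≤ k * Real.exp (-(β * ℓ)) * (n.choose ℓ : ℝ) := by
    have hsubB : Bad ⊆ Finset.univ.biUnion
        (fun i : Fin k => P.filter (fun T => ∀ t ∈ T, t ∉ Co i)) := by
      intro T hT
      rw [hBad, Finset.mem_filter] at hT
      obtain ⟨hTP, i, hi⟩ := hT
      exact Finset.mem_biUnion.2 ⟨i, Finset.mem_univ i, Finset.mem_filter.2 ⟨hTP, hi⟩⟩
    have hcard : Bad.card ≤ ∑ i : Fin k, (P.filter (fun T => ∀ t ∈ T, t ∉ Co i)).card :=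
      le_trans (Finset.card_le_card hsubB) (Finset.card_biUnion_le)
    have heach : ∀ i : Fin k,
        ((P.filter (fun T => ∀ t ∈ T, t ∉ Co i)).card : ℝ) ≤
          Real.exp (-(β * ℓ)) * (n.choose ℓ : ℝ) := by
      intro i
      have hCoX : Co i ⊆ X := (hcoreSub i).trans (hsub i)
      have hmn : (Co i).card ≤ n := Finset.card_le_card hCoX
      have hsub2 : P.filter (fun T => ∀ t ∈ T, t ∉ Co i) ⊆ (X \ Co i).powersetCard ℓ := by
        intro T hT
        rw [Finset.mem_filter] at hT
        obtain ⟨hTP, hTi⟩ := hT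
        obtain ⟨hTX, hTc⟩ := Finset.mem_powersetCard.1 hTP
        refine Finset.mem_powersetCard.2 ⟨?_, hTc⟩
        intro t ht
        exact Finset.mem_sdiff.2 ⟨hTX ht, hTi t ht⟩
      have hcount : (P.filter (fun T => ∀ t ∈ T, t ∉ Co i)).card ≤ (n - (Co i).card).choose ℓ := by
        have := Finset.card_le_card hsub2
        rwa [Finset.card_powersetCard, Finset.card_sdiff_of_subset hCoX] at this
      have hβle : β ≤ ((Co i).card : ℝ) / n := by
        rw [hβ]
        exact Finset.inf'_le _ (Finset.mem_univ i)
      have hexp : Real.exp (-((((Co i).card : ℝ) / n) * ℓ)) ≤ Real.exp (-(β * ℓ)) := by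
        apply Real.exp_le_exp.2
        have : β * ℓ ≤ (((Co i).card : ℝ) / n) * ℓ :=
          mul_le_mul_of_nonneg_right hβle (by positivity)
        linarith
      calc ((P.filter (fun T => ∀ t ∈ T, t ∉ Co i)).card : ℝ)
          ≤ ((n - (Co i).card).choose ℓ : ℝ) := by exact_mod_cast hcount
        _ ≤ Real.exp (-((((Co i).card : ℝ) / n) * ℓ)) * (n.choose ℓ : ℝ) :=
            choose_real n (Co i).card ℓ hmn hnpos
        _ ≤ Real.exp (-(β * ℓ)) * (n.choose ℓ : ℝ) :=
            mul_le_mul_of_nonneg_right hexp (by positivity)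
    calc (Bad.card : ℝ) ≤ ∑ i : Fin k, ((P.filter (fun T => ∀ t ∈ T, t ∉ Co i)).card : ℝ) := by
          exact_mod_cast hcard
      _ ≤ ∑ _i : Fin k, Real.exp (-(β * ℓ)) * (n.choose ℓ : ℝ) :=
          Finset.sum_le_sum (fun i _ => heach i)
      _ = k * Real.exp (-(β * ℓ)) * (n.choose ℓ : ℝ) := by
          rw [Finset.sum_const, Finset.card_univ, Fintype.card_fin]; ring
  -- generic conclusion for any superset of the hitting sets
  have main : ∀ G : Finset (Finset α),
      (∀ T ∈ P, (∀ i, ∃ t ∈ T, t ∈ Co i) → T ∈ G) →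
      1 - k * Real.exp (-(β * ℓ)) ≤ (G.card : ℝ) / (P.card : ℝ) := by
    intro G hhit
    have hPsplit : P.card ≤ G.card + Bad.card := by
      have key : ∀ T ∈ P, T ∈ G ∨ T ∈ Bad := by
        intro T hT
        by_cases h : ∀ i, ∃ t ∈ T, t ∈ Co i
        · exact Or.inl (hhit T hT h)
        · push_neg at h
          obtain ⟨i, hi⟩ := h
          exact Or.inr (Finset.mem_filter.2 ⟨hT, ⟨i, hi⟩⟩)
      have hsubU : P ⊆ G ∪ Bad := fun T hT => Finset.mem_union.2 (key T hT)
      calc P.card ≤ (G ∪ Bad).card := Finset.card_le_card hsubU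
        _ ≤ G.card + Bad.card := Finset.card_union_le _ _
    rw [le_div_iff₀ hPpos]
    have h1 : (P.card : ℝ) ≤ (G.card : ℝ) + (Bad.card : ℝ) := by exact_mod_cast hPsplit
    have h2 : (P.card : ℝ) = (n.choose ℓ : ℝ) := by exact_mod_cast hPcard
    nlinarith [hBadBound, h1, h2, hPpos]
  have step : ∀ T ∈ P, (∀ i, ∃ t ∈ T, t ∈ Co i) →
      (∀ i, ∃ t ∈ T, t ∈ Co i) ∧
      ∀ x ∈ X, ∀ t ∈ T, (∀ s ∈ T, dist x t ≤ dist x s) →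
        ∃ i, x ∈ C i ∧ t ∈ C i := by
    intro T hTP hTall
    refine ⟨hTall, ?_⟩
    intro x hx t ht hnear
    obtain ⟨i, hxi⟩ := hcover x hx
    refine ⟨i, hxi, ?_⟩
    by_contra htc
    obtain ⟨z, hzT, hzCo⟩ := hTall i
    have hTX : T ⊆ X := (Finset.mem_powersetCard.1 hTP).1
    have hlt : dist x z < dist x t := hcore i x hxi z hzCo t (hTX ht) htc
    have hle : dist x t ≤ dist x z := hnear z hzT
    linarith
  rw [Finset.filter_congr_decidable]
  exact main _ (fun T hTP hTall => Finset.mem_filter.2 ⟨hTP, step T hTP hTall⟩)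
end

section
/- Lower bound on centers for nice clusterings: for every k ≥ 1 there exists a finite metric space (X,d) and a nice k-clustering C of X such that any set T ⊆ X of centers whose induced nearest-center partition is a refinement of every nice k-clustering consistent with the points seen so far must have |T| ≥ 2^{k-1}. Concretely, there is a metric space on 2^{k-1} points in which every point forms its own cluster in some nice k-clustering extension, forcing any consistent center set to contain all 2^{k-1} points. -/
/-- A cluster assignment `c : X → Fin k` is *nice*. -/
def IsNice {X : Type*} [MetricSpace X] {k : ℕ} (c : X → Fin k) : Prop :=
  ∀ x y z : X, c x = c y → c x ≠ c z → dist y x < dist z x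

open PiNat

/-- Extend a function on `Fin m` to `ℕ` by `false`. -/
def extB (m : ℕ) (f : Fin m → Bool) : ℕ → Bool :=
  fun i => if h : i < m then f ⟨i, h⟩ else false

lemma extB_injective (m : ℕ) : Function.Injective (extB m) := by
  intro f g h
  funext i
  have := congrFun h i.val
  simpa [extB, i.isLt] using this

/-- The ultrametric on the hypercube induced from `PiNat`. -/
noncomputable def cubeMetric (m : ℕ) : MetricSpace (Fin m → Bool) :=
  MetricSpace.induced (extB m) (extB_injective m) PiNat.metricSpace

lemma cube_dist_eq {m : ℕ} (f g : Fin m → Bool) (h : f ≠ g) :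
    @dist _ (cubeMetric m).toDist f g
      = (1 / 2 : ℝ) ^ firstDiff (extB m f) (extB m g) := by
  have h' : extB m f ≠ extB m g := fun he => h (extB_injective m he)
  have e : @dist _ (cubeMetric m).toDist f g
      = @dist _ PiNat.dist (extB m f) (extB m g) := rfl
  rw [e, PiNat.dist_eq_of_ne h']

lemma firstDiff_eq_of {a b : ℕ → Bool} {j : ℕ} (hj : a j ≠ b j)
    (hlt : ∀ l, l < j → a l = b l) : firstDiff a b = j := by
  have hab : a ≠ b := fun h => hj (congrFun h j)
  rcases lt_trichotomy (firstDiff a b) j with h | h | h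
  · exact absurd (hlt _ h) (apply_firstDiff_ne hab)
  · exact h
  · exact absurd (apply_eq_of_lt_firstDiff h) hj

lemma fd_lt {m : ℕ} {f g : Fin m → Bool} (h : f ≠ g) :
    firstDiff (extB m f) (extB m g) < m := by
  by_contra hge
  push_neg at hge
  have h' : extB m f ≠ extB m g := fun he => h (extB_injective m he)
  have := apply_firstDiff_ne h'
  simp [extB, not_lt.mpr hge] at this

lemma bool_eq_of_ne_of_ne {a b c : Bool} (h1 : a ≠ c) (h2 : b ≠ c) : a = b := by
  revert h1 h2; revert a b c; decide

/-- lower bound on the number of centers.  For every `k ≥ 1` there is a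
finite metric space on `2^(k-1)` points admitting a nice `k`-clustering, in which every
point is a singleton cluster of some nice `k`-clustering; consequently every nonempty
center set `T` whose induced nearest-center partition is consistent with (refines) every
nice `k`-clustering must satisfy `|T| ≥ 2^(k-1)`, i.e. contain all the points. -/
theorem lower_bound_extra_centers :
    ∀ k : ℕ, 1 ≤ k →
      ∃ (X : Type) (_ : MetricSpace X) (_ : Fintype X),
        Fintype.card X = 2 ^ (k - 1) ∧
        (∃ c : X → Fin k, Function.Surjective c ∧ IsNice c) ∧
        (∀ x : X, ∃ c : X → Fin k, Function.Surjective c ∧ IsNice c ∧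
            ∀ y : X, c y = c x ↔ y = x) ∧
        ∀ T : Finset X, T.Nonempty →
          (∀ c : X → Fin k, Function.Surjective c → IsNice c →
            ∀ x t : X, t ∈ T → (∀ s ∈ T, dist x t ≤ dist x s) → c t = c x) →
          2 ^ (k - 1) ≤ T.card := by
  classical
  intro k hk
  set m := k - 1 with hm
  have hkm : k = m + 1 := (Nat.succ_pred_eq_of_pos hk).symm
  have hmk : m < k := by omega
  refine ⟨Fin m → Bool, cubeMetric m, inferInstance, ?_, ?_, ?_, ?_⟩
  case refine_1 => simp [Fintype.card_fun]
  all_goals {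
    letI := cubeMetric m
    have key : ∀ x : Fin m → Bool, ∃ c : (Fin m → Bool) → Fin k,
        Function.Surjective c ∧ IsNice c ∧ ∀ y, c y = c x ↔ y = x := by
      intro x
      set fd : (Fin m → Bool) → ℕ := fun y => firstDiff (extB m y) (extB m x) with hfd
      refine ⟨fun y => if h : y = x then ⟨m, hmk⟩ else ⟨fd y, (fd_lt h).trans hmk⟩,
        ?_, ?_, ?_⟩
      · -- surjective
        intro i
        by_cases hi : i.val = m
        · exact ⟨x, by simp [Fin.ext_iff, hi]⟩
        · have him : i.val < m := by omega
          set a : Fin m := ⟨i.val, him⟩ with ha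
          set y := Function.update x a (!(x a)) with hy
          have hyx : y ≠ x := by
            intro h
            have := congrFun h a
            simp [hy, Function.update_self] at this
          refine ⟨y, ?_⟩
          have hdiff : extB m y i.val ≠ extB m x i.val := by
            simp [extB, him, hy, ha, Function.update_self]
          have hagree : ∀ l, l < i.val → extB m y l = extB m x l := by
            intro l hl
            by_cases hlm : l < m
            · have : (⟨l, hlm⟩ : Fin m) ≠ a := by
                simp [ha, Fin.ext_iff]; omega
              simp [extB, hlm, hy, Function.update_of_ne this]
            · simp [extB, hlm]
          have : fd y = i.val := firstDiff_eq_of hdiff hagree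
          simp [hyx, this, Fin.ext_iff]
      · -- nice
        intro p q r hpq hpr
        dsimp only at hpq hpr
        rcases eq_or_ne p q with rfl | hpq'
        · have hrp : r ≠ p := by
            intro h; exact hpr (by rw [h])
          rw [dist_self]
          exact dist_pos.mpr hrp
        · -- p ≠ q, same cluster
          have hpx : p ≠ x := by
            rintro rfl
            rcases eq_or_ne q p with rfl | hq
            · exact hpq' rfl
            · rw [dif_pos rfl, dif_neg hq] at hpq
              have h1 : fd q < m := fd_lt hq
              have h2 : m = fd q := congrArg Fin.val hpq
              omega
          have hqx : q ≠ x := by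
            rintro rfl
            rw [dif_pos rfl, dif_neg hpx] at hpq
            have h1 : fd p < m := fd_lt hpx
            have h2 : fd p = m := congrArg Fin.val hpq
            omega
          rw [dif_neg hpx, dif_neg hqx] at hpq
          replace hpq : fd p = fd q := congrArg Fin.val hpq
          have hpx' : extB m p ≠ extB m x := fun he => hpx (extB_injective m he)
          have hqx' : extB m q ≠ extB m x := fun he => hqx (extB_injective m he)
          -- ext p and ext q agree up to and including fd p
          have hagree : ∀ l, l ≤ fd p → extB m p l = extB m q l := by
            intro l hl
            rcases lt_or_eq_of_le hl with hl | rfl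
            · have h1 : extB m p l = extB m x l := apply_eq_of_lt_firstDiff hl
              have h2 : extB m q l = extB m x l :=
                apply_eq_of_lt_firstDiff (show l < fd q by omega)
              rw [h1, h2]
            · have h1 : extB m p (fd p) ≠ extB m x (fd p) := apply_firstDiff_ne hpx'
              have h2 : extB m q (fd p) ≠ extB m x (fd p) := by
                rw [hpq]; exact apply_firstDiff_ne hqx'
              exact bool_eq_of_ne_of_ne h1 h2
          have hqp' : extB m q ≠ extB m p := fun he => hpq' (extB_injective m he).symm
          have hfdqp : fd p < firstDiff (extB m q) (extB m p) := by
            by_contra hle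
            push_neg at hle
            exact apply_firstDiff_ne hqp' ((hagree _ hle).symm)
          have hdqp : dist q p = (1/2 : ℝ) ^ firstDiff (extB m q) (extB m p) :=
            cube_dist_eq q p (Ne.symm hpq')
          -- now analyze r
          have key2 : ∃ n : ℕ, dist r p = (1/2 : ℝ) ^ n ∧ n ≤ fd p := by
            rcases eq_or_ne r x with rfl | hrx
            · refine ⟨fd p, ?_, le_refl _⟩
              rw [cube_dist_eq r p (Ne.symm hpx)]
              congr 1
              rw [firstDiff_comm]
            · have hrx' : extB m r ≠ extB m x := fun he => hrx (extB_injective m he)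
              have hj : fd r ≠ fd p := by
                intro h
                apply hpr
                rw [dif_neg hpx, dif_neg hrx]
                exact Fin.ext h.symm
              rcases lt_or_gt_of_ne hj with hji | hij
              · -- fd r < fd p : firstDiff(r,p) = fd r
                refine ⟨fd r, ?_, le_of_lt hji⟩
                have hdiff : extB m r (fd r) ≠ extB m p (fd r) := by
                  have h1 : extB m r (fd r) ≠ extB m x (fd r) := apply_firstDiff_ne hrx'
                  have h2 : extB m p (fd r) = extB m x (fd r) :=
                    apply_eq_of_lt_firstDiff hji
                  rw [h2]; exact h1
                have hagree2 : ∀ l, l < fd r → extB m r l = extB m p l := by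
                  intro l hl
                  have h1 : extB m r l = extB m x l := apply_eq_of_lt_firstDiff hl
                  have h2 : extB m p l = extB m x l :=
                    apply_eq_of_lt_firstDiff (hl.trans hji)
                  rw [h1, h2]
                have hrp : r ≠ p := by
                  intro h; exact hdiff (by rw [h])
                rw [cube_dist_eq r p hrp]
                congr 1
                exact firstDiff_eq_of hdiff hagree2
              · -- fd r > fd p : firstDiff(r,p) = fd p
                refine ⟨fd p, ?_, le_refl _⟩
                have hdiff : extB m r (fd p) ≠ extB m p (fd p) := by
                  have h1 : extB m r (fd p) = extB m x (fd p) :=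
                    apply_eq_of_lt_firstDiff hij
                  have h2 : extB m p (fd p) ≠ extB m x (fd p) := apply_firstDiff_ne hpx'
                  rw [h1]; exact fun h => h2 h.symm
                have hagree2 : ∀ l, l < fd p → extB m r l = extB m p l := by
                  intro l hl
                  have h1 : extB m r l = extB m x l :=
                    apply_eq_of_lt_firstDiff (hl.trans hij)
                  have h2 : extB m p l = extB m x l := apply_eq_of_lt_firstDiff hl
                  rw [h1, h2]
                have hrp : r ≠ p := by
                  intro h; exact hdiff (by rw [h])
                rw [cube_dist_eq r p hrp]
                congr 1
                exact firstDiff_eq_of hdiff hagree2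
          obtain ⟨n, hdrp, hni⟩ := key2
          rw [hdqp, hdrp]
          apply pow_lt_pow_right_of_lt_one₀ (by norm_num) (by norm_num)
          omega
      · -- singleton
        intro y
        constructor
        · intro h
          by_contra hyx
          dsimp only at h
          rw [dif_neg hyx, dif_pos rfl] at h
          have h1 : fd y < m := fd_lt hyx
          have h2 : fd y = m := congrArg Fin.val h
          omega
        · rintro rfl; rfl
    -- now the three remaining goals
    first
    | -- existence of a nice clustering
      (obtain ⟨c, h1, h2, _⟩ := key (fun _ => false); exact ⟨c, h1, h2⟩)
    | -- singleton clusterings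
      exact key
    | -- the center bound
      (intro T hT hcons
       have hsub : (Finset.univ : Finset (Fin m → Bool)) ⊆ T := by
         intro x _
         obtain ⟨t, htT, hmin⟩ := T.exists_min_image (fun s => dist x s) hT
         obtain ⟨c, hsurj, hnice, hsing⟩ := key x
         have ht := hcons c hsurj hnice x t htT hmin
         have : t = x := (hsing t).1 ht
         rwa [← this]
       calc 2 ^ (k - 1) = Fintype.card (Fin m → Bool) := by simp [Fintype.card_fun, hm]
         _ = (Finset.univ : Finset (Fin m → Bool)).card := (Finset.card_univ).symm
         _ ≤ T.card := Finset.card_le_card hsub)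
  }
end

section
/- Every nice clustering of a subset is a union of single-linkage clusters: if S is a finite metric space with a nice ℓ-clustering C (ℓ ≤ k), then each cluster of C corresponds to the leaf set of some node of the single-linkage tree on S at depth less than k; hence the set returned by Candidates(S) (one representative per node at depth < k) includes at least one representative from each cluster of C. -/
open scoped Classical

/-- every cluster of a nice `ℓ`-clustering (`ℓ ≤ k`) of a finite metric
space `S` is a node of the single-linkage merge tree at depth `< k`; hence the output of
`Candidates` (one representative per node at depth `< k`) contains a representative of
every cluster.

The single-linkage execution is modelled by the sequence of partitions `P m`: `P 0` is
the partition into singletons, and `P (m+1)` is obtained from `P m` by merging a pair of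
distinct blocks realizing the minimum inter-block (single-linkage) distance.  `blocks`
is the set of all tree nodes (all blocks ever formed), the depth of a node is the number
of blocks strictly containing it, and `rep` assigns each node a point inside it. -/
theorem nice_clustering_in_single_linkage_tree
    {S : Type*} [MetricSpace S] [Fintype S] [Nonempty S]
    (k ℓ : ℕ) (hℓk : ℓ ≤ k) (hℓ : 0 < ℓ)
    (c : S → Fin ℓ) (hsurj : Function.Surjective c)
    (hnice : ∀ x y z : S, c x = c y → c x ≠ c z → dist y x < dist z x)
    (n : ℕ) (hn : n = Fintype.card S)
    (P : ℕ → Finset (Finset S))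
    (hP0 : P 0 = Finset.univ.image (fun x : S => {x}))
    (hstep : ∀ m : ℕ, m + 1 < n → ∃ A B : Finset S, A ∈ P m ∧ B ∈ P m ∧ A ≠ B ∧
      (∃ a ∈ A, ∃ b ∈ B, ∀ A' ∈ P m, ∀ B' ∈ P m, A' ≠ B' →
        ∀ a' ∈ A', ∀ b' ∈ B', dist a b ≤ dist a' b') ∧
      P (m + 1) = insert (A ∪ B) (((P m).erase A).erase B))
    (blocks : Finset (Finset S)) (hblocks : blocks = (Finset.range n).biUnion P)
    (depth : Finset S → ℕ)
    (hdepth : ∀ B : Finset S, depth B = (blocks.filter (fun B' => B ⊂ B')).card)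
    (rep : Finset S → S) (hrep : ∀ B ∈ blocks, B.Nonempty → rep B ∈ B) :
    ∀ i : Fin ℓ, ∃ B ∈ blocks, (∀ x : S, x ∈ B ↔ c x = i) ∧ depth B < k ∧
      rep B ∈ B ∧ c (rep B) = i := by
  have hn1 : 1 ≤ n := by rw [hn]; exact Fintype.card_pos
  -- The main invariant along the execution.
  have key : ∀ m, m < n →
      (∀ B ∈ P m, B.Nonempty) ∧
      (∀ x : S, ∃! B, B ∈ P m ∧ x ∈ B) ∧
      (P m).card = n - m ∧
      (∀ B ∈ P m, (∀ x ∈ B, ∀ y ∈ B, c x = c y) ∨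
        (∀ x ∈ B, ∀ y : S, c y = c x → y ∈ B)) := by
    intro m
    induction m with
    | zero =>
      intro _
      refine ⟨?_, ?_, ?_, ?_⟩
      · intro B hB
        rw [hP0] at hB
        obtain ⟨z, -, rfl⟩ := Finset.mem_image.mp hB
        exact ⟨z, Finset.mem_singleton_self z⟩
      · intro x
        refine ⟨{x}, ⟨?_, Finset.mem_singleton_self x⟩, ?_⟩
        · rw [hP0]; exact Finset.mem_image.mpr ⟨x, Finset.mem_univ x, rfl⟩
        · rintro B ⟨hB, hxB⟩
          rw [hP0] at hB
          obtain ⟨z, -, rfl⟩ := Finset.mem_image.mp hB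
          rw [Finset.mem_singleton.mp hxB]
      · rw [hP0, Finset.card_image_of_injective _ Finset.singleton_injective,
          Finset.card_univ, ← hn]
        omega
      · intro B hB
        rw [hP0] at hB
        obtain ⟨z, -, rfl⟩ := Finset.mem_image.mp hB
        left
        intro u hu v hv
        rw [Finset.mem_singleton.mp hu, Finset.mem_singleton.mp hv]
    | succ m ih =>
      intro hm1
      have hm : m < n := Nat.lt_of_succ_lt hm1
      obtain ⟨hne, huniq, hcard, hinv⟩ := ih hm
      obtain ⟨A, B, hA, hB, hAB, ⟨a, ha, b, hb, hmin⟩, hP1⟩ := hstep m hm1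
      have hdisj : ∀ {x : S} {B1 B2 : Finset S}, B1 ∈ P m → B2 ∈ P m →
          x ∈ B1 → x ∈ B2 → B1 = B2 := by
        intro x B1 B2 h1 h2 hx1 hx2
        obtain ⟨Bx, -, hun⟩ := huniq x
        rw [hun B1 ⟨h1, hx1⟩, hun B2 ⟨h2, hx2⟩]
      have hABdisj : ∀ x ∈ A, x ∉ B := fun x hxA hxB => hAB (hdisj hA hB hxA hxB)
      have hABnot : A ∪ B ∉ ((P m).erase A).erase B := by
        intro h
        have h' : A ∪ B ∈ P m := Finset.mem_of_mem_erase (Finset.mem_of_mem_erase h)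
        have hne' : A ∪ B ≠ A := (Finset.mem_erase.mp (Finset.mem_of_mem_erase h)).1
        exact hne' (hdisj h' hA (Finset.mem_union_left B ha) ha)
      refine ⟨?_, ?_, ?_, ?_⟩
      · intro B' hB'
        rw [hP1] at hB'
        rcases Finset.mem_insert.mp hB' with rfl | h
        · exact ⟨a, Finset.mem_union_left B ha⟩
        · exact hne B' (Finset.mem_of_mem_erase (Finset.mem_of_mem_erase h))
      · intro x
        obtain ⟨Bx, ⟨hBx, hxBx⟩, hun⟩ := huniq x
        by_cases hxAB : Bx = A ∨ Bx = B
        · refine ⟨A ∪ B, ⟨by rw [hP1]; exact Finset.mem_insert_self _ _, ?_⟩, ?_⟩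
          · rcases hxAB with rfl | rfl
            · exact Finset.mem_union_left B hxBx
            · exact Finset.mem_union_right A hxBx
          · rintro B' ⟨hB', hxB'⟩
            rw [hP1] at hB'
            rcases Finset.mem_insert.mp hB' with rfl | h
            · rfl
            · exfalso
              have h1 : B' ∈ P m := Finset.mem_of_mem_erase (Finset.mem_of_mem_erase h)
              have h2 : B' = Bx := hun B' ⟨h1, hxB'⟩ ▸ rfl
              have h3 : B' ≠ B := (Finset.mem_erase.mp h).1
              have h4 : B' ≠ A := (Finset.mem_erase.mp (Finset.mem_of_mem_erase h)).1
              rcases hxAB with rfl | rfl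
              · exact h4 (hun B' ⟨h1, hxB'⟩)
              · exact h3 (hun B' ⟨h1, hxB'⟩)
        · push_neg at hxAB
          refine ⟨Bx, ⟨?_, hxBx⟩, ?_⟩
          · rw [hP1]
            exact Finset.mem_insert_of_mem (Finset.mem_erase.mpr ⟨hxAB.2,
              Finset.mem_erase.mpr ⟨hxAB.1, hBx⟩⟩)
          · rintro B' ⟨hB', hxB'⟩
            rw [hP1] at hB'
            rcases Finset.mem_insert.mp hB' with rfl | h
            · exfalso
              rcases Finset.mem_union.mp hxB' with h1 | h1
              · exact hxAB.1 (hdisj hBx hA hxBx h1)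
              · exact hxAB.2 (hdisj hBx hB hxBx h1)
            · exact hdisj (Finset.mem_of_mem_erase (Finset.mem_of_mem_erase h)) hBx hxB' hxBx
      · have hBmem : B ∈ (P m).erase A := Finset.mem_erase.mpr ⟨Ne.symm hAB, hB⟩
        rw [hP1, Finset.card_insert_of_notMem hABnot, Finset.card_erase_of_mem hBmem,
          Finset.card_erase_of_mem hA]
        omega
      · intro B' hB'
        rw [hP1] at hB'
        rcases Finset.mem_insert.mp hB' with rfl | h
        · -- the merged block
          by_cases hAcl : ∀ x ∈ A, ∀ y : S, c y = c x → y ∈ A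
          · by_cases hBcl : ∀ x ∈ B, ∀ y : S, c y = c x → y ∈ B
            · right
              intro x hx y hy
              rcases Finset.mem_union.mp hx with h1 | h1
              · exact Finset.mem_union_left _ (hAcl x h1 y hy)
              · exact Finset.mem_union_right _ (hBcl x h1 y hy)
            · -- B is not closed, so B is monochromatic; derive c a = c b, contradiction
              exfalso
              push_neg at hBcl
              obtain ⟨x0, hx0, y0, hy0, hy0n⟩ := hBcl
              have hBcol : ∀ z ∈ B, ∀ w ∈ B, c z = c w :=
                (hinv B hB).resolve_right (fun h => hy0n (h x0 hx0 y0 hy0))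
              have hcab : c a = c b := by
                by_contra hne'
                have hcy0 : c y0 = c b := hy0.trans (hBcol x0 hx0 b hb)
                obtain ⟨B'', ⟨hB'', hyB''⟩, -⟩ := huniq y0
                have hB''B : B'' ≠ B := fun h => hy0n (h ▸ hyB'')
                have h1 : dist a b ≤ dist b y0 :=
                  hmin B hB B'' hB'' (Ne.symm hB''B) b hb y0 hyB''
                have h2 : dist y0 b < dist a b :=
                  hnice b y0 a hcy0.symm (fun h => hne' h.symm)
                have e1 := dist_comm b y0
                linarith
              exact hABdisj b (hAcl a ha b hcab.symm) hb
          · -- A is not closed, so A is monochromatic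
            push_neg at hAcl
            obtain ⟨x0, hx0, y0, hy0, hy0n⟩ := hAcl
            have hAcol : ∀ z ∈ A, ∀ w ∈ A, c z = c w :=
              (hinv A hA).resolve_right (fun h => hy0n (h x0 hx0 y0 hy0))
            have hcab : c a = c b := by
              by_contra hne'
              have hcy0 : c y0 = c a := hy0.trans (hAcol x0 hx0 a ha)
              obtain ⟨B'', ⟨hB'', hyB''⟩, -⟩ := huniq y0
              have hB''A : B'' ≠ A := fun h => hy0n (h ▸ hyB'')
              have h1 : dist a b ≤ dist a y0 :=
                hmin A hA B'' hB'' (Ne.symm hB''A) a ha y0 hyB''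
              have h2 : dist y0 a < dist b a := hnice a y0 b hcy0.symm hne'
              have e1 := dist_comm a y0
              have e2 := dist_comm a b
              linarith
            rcases hinv B hB with hBcol | hBcl2
            · left
              have cA : ∀ z ∈ A ∪ B, c z = c a := by
                intro z hz
                rcases Finset.mem_union.mp hz with h1 | h1
                · exact hAcol z h1 a ha
                · exact (hBcol z h1 b hb).trans hcab.symm
              intro x hx y hy
              rw [cA x hx, cA y hy]
            · exact absurd (hBcl2 b hb a hcab) (hABdisj a ha)
        · exact hinv B' (Finset.mem_of_mem_erase (Finset.mem_of_mem_erase h))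
  -- uniqueness of containing block, as an equality statement
  have uniq_eq : ∀ m, m < n → ∀ B1 B2 : Finset S, B1 ∈ P m → B2 ∈ P m →
      ∀ x : S, x ∈ B1 → x ∈ B2 → B1 = B2 := by
    intro m hm B1 B2 h1 h2 x hx1 hx2
    obtain ⟨Bx, -, hun⟩ := (key m hm).2.1 x
    rw [hun B1 ⟨h1, hx1⟩, hun B2 ⟨h2, hx2⟩]
  -- blocks grow along the execution
  have mono : ∀ m, m + 1 < n → ∀ B' ∈ P m, ∃ B'' ∈ P (m + 1), B' ⊆ B'' := by
    intro m hm1 B' hB'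
    obtain ⟨A, B, hA, hB, hAB, -, hP1⟩ := hstep m hm1
    by_cases h : B' = A ∨ B' = B
    · refine ⟨A ∪ B, by rw [hP1]; exact Finset.mem_insert_self _ _, ?_⟩
      rcases h with rfl | rfl
      · exact Finset.subset_union_left
      · exact Finset.subset_union_right
    · push_neg at h
      exact ⟨B', by
        rw [hP1]
        exact Finset.mem_insert_of_mem (Finset.mem_erase.mpr ⟨h.2,
          Finset.mem_erase.mpr ⟨h.1, hB'⟩⟩), Finset.Subset.refl _⟩
  -- blocks containing a fixed point form a chain
  have chain : ∀ m2, m2 < n → ∀ m1, m1 ≤ m2 → ∀ B1 ∈ P m1, ∀ B2 ∈ P m2,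
      ∀ x : S, x ∈ B1 → x ∈ B2 → B1 ⊆ B2 := by
    intro m2
    induction m2 with
    | zero =>
      intro h0 m1 hm1 B1 hB1 B2 hB2 x hx1 hx2
      have : m1 = 0 := Nat.le_zero.mp hm1
      subst this
      rw [uniq_eq 0 h0 B1 B2 hB1 hB2 x hx1 hx2]
    | succ m2 ih =>
      intro hm2n m1 hm1 B1 hB1 B2 hB2 x hx1 hx2
      rcases Nat.lt_or_ge m1 (m2 + 1) with hlt | hge
      · have hm1le : m1 ≤ m2 := Nat.lt_succ_iff.mp hlt
        obtain ⟨Bx, ⟨hBx, hxBx⟩, -⟩ := (key m2 (Nat.lt_of_succ_lt hm2n)).2.1 x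
        have h1 : B1 ⊆ Bx := ih (Nat.lt_of_succ_lt hm2n) m1 hm1le B1 hB1 Bx hBx x hx1 hxBx
        obtain ⟨Bx', hBx', hsub⟩ := mono m2 hm2n Bx hBx
        have hxBx' : x ∈ Bx' := hsub hxBx
        rw [← uniq_eq (m2 + 1) hm2n Bx' B2 hBx' hB2 x hxBx' hx2]
        exact h1.trans hsub
      · have : m1 = m2 + 1 := le_antisymm hm1 hge
        subst this
        rw [uniq_eq (m2 + 1) hm2n B1 B2 hB1 hB2 x hx1 hx2]
  -- now fix a cluster
  intro i
  obtain ⟨x, hx⟩ := hsurj i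
  set C : Finset S := Finset.univ.filter (fun z => c z = i) with hCdef
  have hxC : x ∈ C := Finset.mem_filter.mpr ⟨Finset.mem_univ x, hx⟩
  -- at the last step, the (unique) block contains C
  have hlast : ∃ B' ∈ P (n - 1), x ∈ B' ∧ C ⊆ B' := by
    have hkey := key (n - 1) (by omega)
    obtain ⟨Bx, ⟨hBx, hxBx⟩, -⟩ := hkey.2.1 x
    refine ⟨Bx, hBx, hxBx, ?_⟩
    intro y hy
    obtain ⟨By, ⟨hBy, hyBy⟩, -⟩ := hkey.2.1 y
    have hc1 : (P (n - 1)).card ≤ 1 := by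
      have := hkey.2.2.1
      omega
    have : Bx = By := Finset.card_le_one.mp hc1 Bx hBx By hBy
    rw [this]
    exact hyBy
  -- the cluster C is formed at some step
  have form : ∀ m, m < n → (∃ B' ∈ P m, x ∈ B' ∧ C ⊆ B') → ∃ m' ≤ m, C ∈ P m' := by
    intro m
    induction m with
    | zero =>
      rintro h0 ⟨B', hB', hxB', hCB'⟩
      refine ⟨0, le_refl _, ?_⟩
      have hB'' := hB'
      rw [hP0] at hB''
      obtain ⟨z, -, rfl⟩ := Finset.mem_image.mp hB''
      have hzx : z = x := (Finset.mem_singleton.mp hxB').symm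
      have : C = {z} := Finset.Subset.antisymm hCB'
        (Finset.singleton_subset_iff.mpr (hzx ▸ hxC))
      rw [this]
      exact hB'
    | succ m ihm =>
      rintro hm1n ⟨B', hB', hxB', hCB'⟩
      by_cases hprev : ∃ B'' ∈ P m, x ∈ B'' ∧ C ⊆ B''
      · obtain ⟨m', hm', h⟩ := ihm (by omega) hprev
        exact ⟨m', by omega, h⟩
      · have hmn : m < n := by omega
        obtain ⟨A, B, hA, hB, hAB, ⟨a, ha, b, hb, hmin⟩, hP1⟩ := hstep m hm1n
        rw [hP1] at hB'
        rcases Finset.mem_insert.mp hB' with rfl | hmem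
        · -- core argument, applied symmetrically
          have core : ∀ (A B : Finset S) (a b : S), A ∈ P m → B ∈ P m → A ≠ B →
              a ∈ A → b ∈ B →
              (∀ A' ∈ P m, ∀ B' ∈ P m, A' ≠ B' →
                ∀ a' ∈ A', ∀ b' ∈ B', dist a b ≤ dist a' b') →
              x ∈ A → A ∪ B ⊆ C := by
            intro A B a b hA hB hAB ha hb hmin hxA
            have hnCA : ¬ C ⊆ A := fun h => hprev ⟨A, hA, hxA, h⟩
            have hAcol : ∀ z ∈ A, c z = i := by
              rcases (key m hmn).2.2.2 A hA with h | h
              · intro z hz; exact (h z hz x hxA).trans hx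
              · exfalso
                exact hnCA (fun y hy =>
                  h x hxA y ((Finset.mem_filter.mp hy).2.trans hx.symm))
            obtain ⟨y, hyC, hyA⟩ := Finset.not_subset.mp hnCA
            have hcb : c b = i := by
              by_contra hne'
              obtain ⟨B'', ⟨hB'', hyB''⟩, -⟩ := (key m hmn).2.1 y
              have hB''A : B'' ≠ A := fun h => hyA (h ▸ hyB'')
              have h1 : dist a b ≤ dist a y :=
                hmin A hA B'' hB'' (Ne.symm hB''A) a ha y hyB''
              have hcay : c a = c y :=
                (hAcol a ha).trans (Finset.mem_filter.mp hyC).2.symm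
              have hcab : c a ≠ c b := fun h => hne' (h ▸ hAcol a ha)
              have h2 : dist y a < dist b a := hnice a y b hcay hcab
              have e1 := dist_comm a y
              have e2 := dist_comm a b
              linarith
            have hBsub : B ⊆ C := by
              rcases (key m hmn).2.2.2 B hB with h | h
              · intro z hz
                exact Finset.mem_filter.mpr ⟨Finset.mem_univ z, (h z hz b hb).trans hcb⟩
              · exfalso
                apply hprev
                have hCB : C ⊆ B := fun y' hy' =>
                  h b hb y' ((Finset.mem_filter.mp hy').2.trans hcb.symm)
                exact ⟨B, hB, hCB hxC, hCB⟩
            intro z hz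
            rcases Finset.mem_union.mp hz with h1 | h1
            · exact Finset.mem_filter.mpr ⟨Finset.mem_univ z, hAcol z h1⟩
            · exact hBsub h1
          have hmin' : ∀ A' ∈ P m, ∀ B' ∈ P m, A' ≠ B' →
              ∀ a' ∈ A', ∀ b' ∈ B', dist b a ≤ dist a' b' := by
            intro A' hA' B' hB' hne' a' ha' b' hb'
            rw [dist_comm]
            exact hmin A' hA' B' hB' hne' a' ha' b' hb'
          have hsub : A ∪ B ⊆ C := by
            rcases Finset.mem_union.mp hxB' with hxA | hxB
            · exact core A B a b hA hB hAB ha hb hmin hxA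
            · rw [Finset.union_comm]
              exact core B A b a hB hA hAB.symm hb ha hmin' hxB
          have heq : A ∪ B = C := Finset.Subset.antisymm hsub hCB'
          refine ⟨m + 1, le_refl _, ?_⟩
          rw [← heq, hP1]
          exact Finset.mem_insert_self _ _
        · exact absurd ⟨B', Finset.mem_of_mem_erase (Finset.mem_of_mem_erase hmem),
            hxB', hCB'⟩ hprev
  obtain ⟨m', hm'le, hCm'⟩ := form (n - 1) (by omega) hlast
  have hCblocks : C ∈ blocks := by
    rw [hblocks]
    exact Finset.mem_biUnion.mpr ⟨m', Finset.mem_range.mpr (by omega), hCm'⟩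
  -- depth bound
  have hdep : depth C < k := by
    rw [hdepth C]
    have hle : (blocks.filter (fun B' => C ⊂ B')).card ≤ (Finset.Icc 2 ℓ).card := by
      apply Finset.card_le_card_of_injOn (fun B' => (B'.image c).card)
      · intro B' hB'
        obtain ⟨hB'bl, hCB'⟩ := Finset.mem_filter.mp hB'
        obtain ⟨z, hzB', hzC⟩ := Finset.exists_of_ssubset hCB'
        have hxB' : x ∈ B' := hCB'.subset hxC
        rw [Finset.mem_coe, Finset.mem_Icc]
        constructor
        · have h1 : i ∈ B'.image c := Finset.mem_image.mpr ⟨x, hxB', hx⟩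
          have h2 : c z ∈ B'.image c := Finset.mem_image_of_mem c hzB'
          have h3 : c z ≠ i := fun h =>
            hzC (Finset.mem_filter.mpr ⟨Finset.mem_univ z, h⟩)
          exact Finset.one_lt_card.mpr ⟨i, h1, c z, h2, fun h => h3 h.symm⟩
        · calc (B'.image c).card ≤ Fintype.card (Fin ℓ) := Finset.card_le_univ _
            _ = ℓ := Fintype.card_fin ℓ
      · intro B1 hB1 B2 hB2 heq
        simp only [Finset.coe_filter, Set.mem_setOf_eq] at hB1 hB2
        obtain ⟨hB1bl, hCB1⟩ := hB1
        obtain ⟨hB2bl, hCB2⟩ := hB2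
        have closed : ∀ B' ∈ blocks, C ⊂ B' →
            (∀ u ∈ B', ∀ y : S, c y = c u → y ∈ B') := by
          intro B' hB'bl hCB'
          obtain ⟨m'', hm'', hB'P⟩ := Finset.mem_biUnion.mp (hblocks ▸ hB'bl)
          rcases (key m'' (Finset.mem_range.mp hm'')).2.2.2 B' hB'P with h | h
          · exfalso
            have hsub : B' ⊆ C := by
              intro z hz
              exact Finset.mem_filter.mpr ⟨Finset.mem_univ z,
                (h z hz x (hCB'.subset hxC)).trans hx⟩
            exact hCB'.ne (Finset.Subset.antisymm hCB'.subset hsub)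
          · exact h
        obtain ⟨m1, hm1r, hB1P⟩ := Finset.mem_biUnion.mp (hblocks ▸ hB1bl)
        obtain ⟨m2, hm2r, hB2P⟩ := Finset.mem_biUnion.mp (hblocks ▸ hB2bl)
        have hx1 : x ∈ B1 := hCB1.subset hxC
        have hx2 : x ∈ B2 := hCB2.subset hxC
        have main : ∀ (Ba Bb : Finset S), Ba ⊆ Bb →
            (Ba.image c).card = (Bb.image c).card →
            (∀ u ∈ Ba, ∀ y : S, c y = c u → y ∈ Ba) → Ba = Bb := by
          intro Ba Bb hsub hcard hcl
          have himg : Ba.image c = Bb.image c :=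
            Finset.eq_of_subset_of_card_le (Finset.image_subset_image hsub)
              (le_of_eq hcard.symm)
          apply Finset.Subset.antisymm hsub
          intro z hz
          have hz' : c z ∈ Ba.image c := himg ▸ Finset.mem_image_of_mem c hz
          obtain ⟨w, hw, hwz⟩ := Finset.mem_image.mp hz'
          exact hcl w hw z hwz.symm
        rcases le_total m1 m2 with h12 | h21
        · exact main B1 B2
            (chain m2 (Finset.mem_range.mp hm2r) m1 h12 B1 hB1P B2 hB2P x hx1 hx2)
            heq (closed B1 hB1bl hCB1)
        · exact (main B2 B1
            (chain m1 (Finset.mem_range.mp hm1r) m2 h21 B2 hB2P B1 hB1P x hx2 hx1)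
            heq.symm (closed B2 hB2bl hCB2)).symm
    have hIcc : (Finset.Icc 2 ℓ).card = ℓ - 1 := by
      rw [Nat.card_Icc]
      omega
    omega
  have hCne : C.Nonempty := ⟨x, hxC⟩
  refine ⟨C, hCblocks, ?_, hdep, hrep C hCblocks hCne, ?_⟩
  · intro z
    constructor
    · intro h; exact (Finset.mem_filter.mp h).2
    · intro h; exact Finset.mem_filter.mpr ⟨Finset.mem_univ z, h⟩
  · exact (Finset.mem_filter.mp (hrep C hCblocks hCne)).2
end

section
/- Sequential nearest-neighbour clustering is perfect-detecting: suppose (X,d) is a finite metric space with a perfect k-clustering C. Then for any ordering of the points, the incremental procedure that maintains k centers, initialized to the first k points, and upon each new point adds it to the center set and then merges the two closest centers (replacing them by either one), ends with exactly one center in each cluster of C, and these centers induce C. -/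
open scoped Classical

/-- sequential nearest-neighbour clustering is perfect-detecting.  Let
`(X,d)` be a finite metric space with a perfect `k`-clustering `c`, and let
`x 0, …, x (n-1)` be any ordering of its `n` points.  The procedure keeps `k` centers:
`T k` consists of the first `k` points, and for each later point the procedure adds it
to the center set and replaces the closest pair of centers by either of its members.
Then the final center set `T n` has exactly one center in each cluster, and these
centers induce `c` (each point's nearest center lies in its own cluster). -/
theorem sequential_nearest_neighbour_perfect_detecting
    {X : Type*} [MetricSpace X] [Fintype X]
    (k : ℕ) (hk : 0 < k) (c : X → Fin k) (hsurj : Function.Surjective c)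
    (hperf : ∀ x y w z : X, c x = c y → c w ≠ c z → dist x y < dist w z)
    (n : ℕ) (hn : n = Fintype.card X) (hkn : k ≤ n)
    (x : ℕ → X) (henum : ∀ p : X, ∃ m < n, x m = p)
    (hinj : ∀ m m', m < n → m' < n → x m = x m' → m = m')
    (T : ℕ → Finset X)
    (hTinit : T k = (Finset.range k).image x)
    (hstep : ∀ m : ℕ, k ≤ m → m < n →
      ∃ t t' : X, t ∈ insert (x m) (T m) ∧ t' ∈ insert (x m) (T m) ∧ t ≠ t' ∧
        (∀ s ∈ insert (x m) (T m), ∀ s' ∈ insert (x m) (T m), s ≠ s' →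
          dist t t' ≤ dist s s') ∧
        (T (m + 1) = (insert (x m) (T m)).erase t ∨
         T (m + 1) = (insert (x m) (T m)).erase t')) :
    (∀ i : Fin k, ∃! t : X, t ∈ T n ∧ c t = i) ∧
    ∀ p t : X, t ∈ T n → (∀ s ∈ T n, dist p t ≤ dist p s) → c t = c p := by
  -- Invariant: card k, subset of points seen so far, and clusters hit = clusters seen
  have hinv : ∀ m, k ≤ m → m ≤ n →
      (T m).card = k ∧ T m ⊆ (Finset.range m).image x ∧
      (T m).image c = ((Finset.range m).image x).image c := by
    intro m
    induction m with
    | zero => intro h1 h2; omega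
    | succ m ih =>
      intro h1 h2
      rcases Nat.lt_or_ge k (m+1) with hlt | hge
      · -- step case: k ≤ m
        have hkm : k ≤ m := by omega
        have hmn : m < n := by omega
        obtain ⟨hcard, hsub, himg⟩ := ih hkm (by omega)
        obtain ⟨t, t', ht, ht', htne, hmin, hcases⟩ := hstep m hkm hmn
        set S := insert (x m) (T m) with hS
        have hxm : x m ∉ T m := by
          intro hmem
          obtain ⟨j, hj, hj2⟩ := Finset.mem_image.mp (hsub hmem)
          have := hinj m j hmn (by simp at hj; omega) hj2.symm
          simp at hj; omega
        have hScard : S.card = k + 1 := by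
          rw [hS, Finset.card_insert_of_notMem hxm, hcard]
        -- closest pair lies in one cluster
        have hpigeon : ∃ a ∈ S, ∃ b ∈ S, a ≠ b ∧ c a = c b := by
          have : Fintype.card (Fin k) < S.card := by simp [hScard]
          obtain ⟨a, ha, b, hb, hab, hcab⟩ :=
            Finset.exists_ne_map_eq_of_card_lt_of_maps_to
              (by rw [hScard]; simp)
              (fun a _ => Finset.mem_univ (c a))
          exact ⟨a, ha, b, hb, hab, hcab⟩
        obtain ⟨a, ha, b, hb, hab, hcab⟩ := hpigeon
        have hctt' : c t = c t' := by
          by_contra hne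
          have h1 := hperf a b t t' hcab hne
          have h2 := hmin a ha b hb hab
          linarith
        -- clusters of S = clusters of first m+1 points
        have hSimg : S.image c = ((Finset.range (m+1)).image x).image c := by
          rw [hS, Finset.image_insert, himg, Finset.range_add_one, Finset.image_insert,
            Finset.image_insert]
        -- erasing t or t' preserves the cluster image
        have key : ∀ u v : X, u ∈ S → v ∈ S → u ≠ v → c u = c v →
            (S.erase u).image c = S.image c := by
          intro u v hu hv huv hcuv
          have hvE : v ∈ S.erase u := Finset.mem_erase.mpr ⟨fun h => huv h.symm, hv⟩
          have : S = insert u (S.erase u) := (Finset.insert_erase hu).symm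
          conv_rhs => rw [this]
          rw [Finset.image_insert]
          exact (Finset.insert_eq_self.mpr
            (Finset.mem_image.mpr ⟨v, hvE, hcuv.symm⟩)).symm
        have hTsub : T (m+1) ⊆ S := by
          rcases hcases with h | h <;> rw [h] <;> exact Finset.erase_subset _ _
        have hcard' : (T (m+1)).card = k := by
          rcases hcases with h | h <;> rw [h, Finset.card_erase_of_mem ‹_›, hScard] <;> omega
        have himg' : (T (m+1)).image c = ((Finset.range (m+1)).image x).image c := by
          rcases hcases with h | h
          · rw [h, key t t' ht ht' htne hctt', hSimg]
          · rw [h, key t' t ht' ht htne.symm hctt'.symm, hSimg]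
        refine ⟨hcard', ?_, himg'⟩
        refine hTsub.trans ?_
        intro s hs
        rcases Finset.mem_insert.mp hs with h | h
        · exact Finset.mem_image.mpr ⟨m, by simp, h.symm⟩
        · exact Finset.image_subset_image (by
            intro j hj; simp at hj ⊢; omega) (hsub h)
      · -- base case: m + 1 = k
        have hmk : m + 1 = k := by omega
        have hinjOn : Set.InjOn x (Finset.range k : Set ℕ) := by
          intro a ha b hb hab
          simp only [Finset.coe_range, Set.mem_Iio] at ha hb
          exact hinj a b (by omega) (by omega) hab
        have : T (m+1) = (Finset.range (m+1)).image x := by rw [hmk, hTinit]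
        rw [this]
        refine ⟨?_, subset_refl _, rfl⟩
        rw [← hmk] at hinjOn
        rw [Finset.card_image_of_injOn hinjOn, Finset.card_range]
        exact hmk
  obtain ⟨hcard, -, himg⟩ := hinv n hkn le_rfl
  -- clusters of all points = univ
  have hall : ((Finset.range n).image x).image c = Finset.univ := by
    apply Finset.eq_univ_of_forall
    intro i
    obtain ⟨p, hp⟩ := hsurj i
    obtain ⟨m, hm, hxm⟩ := henum p
    exact Finset.mem_image.mpr ⟨p, Finset.mem_image.mpr ⟨m, Finset.mem_range.mpr hm, hxm⟩, hp⟩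
  have hTuniv : (T n).image c = Finset.univ := by rw [himg, hall]
  have hinjTn : Set.InjOn c (T n : Set X) := by
    apply Finset.injOn_of_card_image_eq
    rw [hTuniv, hcard]; simp
  constructor
  · intro i
    have : i ∈ (T n).image c := by rw [hTuniv]; exact Finset.mem_univ i
    obtain ⟨t, ht, hct⟩ := Finset.mem_image.mp this
    exact ⟨t, ⟨ht, hct⟩, fun s ⟨hs, hcs⟩ => hinjTn hs ht (hcs.trans hct.symm)⟩
  · intro p t ht hnear
    by_contra hne
    have : c p ∈ (T n).image c := by rw [hTuniv]; exact Finset.mem_univ _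
    obtain ⟨s, hs, hcs⟩ := Finset.mem_image.mp this
    have h1 := hperf p s p t hcs.symm (fun h => hne (h.symm ▸ rfl))
    have h2 := hnear s hs
    linarith
end
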